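/- Suppose (T, ⊑) is finite with least element ⊥ and any two elements of T having a common upper bound are comparable, and suppose the program Π is consistent. Then T_Π↑i is defined for every i ∈ ℕ, the sequence (T_Π↑i) is increasing in the pointwise order, it is eventually constant with limit I* satisfying T_Π(I*) = I*, and I* is the least model of Π (I* is a model of Π and I* ≼ M for every model M of Π). -/

import Mathlib

/-- A ground GAP rule: a head literal (element of `A × Bool`) with a head
annotation in `T`, together with a finite set of body pairs of literals
with annotations. -/
structure GAPRule (A T : Type*) where
  head : A × Bool
  headAnn : T
  body : Set ((A × Bool) × T)
  body_finite : body.Finite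

/-- An interpretation `I` satisfies the annotated literal `ℓ:μ` iff `μ ⊑ I ℓ`. -/
def satLit {A T : Type*} [PartialOrder T] (I : A × Bool → T) (ℓ : A × Bool) (μ : T) : Prop :=
  μ ≤ I ℓ

/-- An interpretation satisfies a rule iff it satisfies the head annotated
literal or fails to satisfy some body annotated literal. -/
def satRule {A T : Type*} [PartialOrder T] (I : A × Bool → T) (r : GAPRule A T) : Prop :=
  satLit I r.head r.headAnn ∨ ∃ p ∈ r.body, ¬ satLit I p.1 p.2

/-- `I` is a model of a program `P` iff it satisfies every rule of `P`. -/
def isModel {A T : Type*} [PartialOrder T] (I : A × Bool → T) (P : Set (GAPRule A T)) : Prop :=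
  ∀ r ∈ P, satRule I r

/-- `annoSet P I ℓ = {I ℓ} ∪ {μ₀ : some rule of P has head ℓ:μ₀ and I satisfies
every body annotated literal of that rule}`. -/
def annoSet {A T : Type*} [PartialOrder T] (P : Set (GAPRule A T)) (I : A × Bool → T)
    (ℓ : A × Bool) : Set T :=
  {I ℓ} ∪ {μ | ∃ r ∈ P, r.head = ℓ ∧ r.headAnn = μ ∧ ∀ p ∈ r.body, satLit I p.1 p.2}


/-- elements of `annoSet` are bounded by any model above `I`. -/
lemma annoSet_le_model {A T : Type*} [PartialOrder T] {P : Set (GAPRule A T)}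
    {I M : A × Bool → T} (hM : isModel M P) (hIM : ∀ ℓ, I ℓ ≤ M ℓ) (ℓ : A × Bool) :
    ∀ μ ∈ annoSet P I ℓ, μ ≤ M ℓ := by
  rintro μ (rfl | ⟨r, hrP, hhead, rfl, hbody⟩)
  · exact hIM ℓ
  · rcases hM r hrP with h | ⟨p, hp, hns⟩
    · exact hhead ▸ h
    · exact absurd (le_trans (hbody p hp) (hIM p.1)) hns

/-- a nonempty set with a common upper bound has a greatest element. -/
lemma exists_greatest_of_bdd {T : Type*} [PartialOrder T] [Fintype T]
    (hcomp : ∀ a b : T, (∃ c : T, a ≤ c ∧ b ≤ c) → a ≤ b ∨ b ≤ a)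
    (S : Set T) (hne : S.Nonempty) (c : T) (hc : ∀ x ∈ S, x ≤ c) :
    ∃ m, IsGreatest S m := by
  classical
  obtain ⟨m, hmS, hmax⟩ := (S.toFinite.toFinset).exists_maximal
    (S.toFinite.toFinset_nonempty.2 hne)
  rw [Set.Finite.mem_toFinset] at hmS
  refine ⟨m, hmS, fun x hx => ?_⟩
  rcases hcomp x m ⟨c, hc x hx, hc m hmS⟩ with h | h
  · exact h
  · rcases lt_or_eq_of_le h with h' | h'
    · exact absurd (hmax (S.toFinite.mem_toFinset.2 hx) h'.le) h'.not_ge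
    · exact le_of_eq h'.symm

open Classical in
noncomputable def gapStep {A T : Type*} [PartialOrder T] (P : Set (GAPRule A T))
    (I : A × Bool → T) : A × Bool → T :=
  fun ℓ => if h : ∃ m, IsGreatest (annoSet P I ℓ) m then h.choose else I ℓ

noncomputable def gapSeq {A T : Type*} [PartialOrder T] [OrderBot T]
    (P : Set (GAPRule A T)) : ℕ → (A × Bool → T)
  | 0 => fun _ => ⊥
  | i + 1 => gapStep P (gapSeq P i)

lemma gapStep_greatest {A T : Type*} [PartialOrder T] [Fintype T]
    (hcomp : ∀ a b : T, (∃ c : T, a ≤ c ∧ b ≤ c) → a ≤ b ∨ b ≤ a)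
    {P : Set (GAPRule A T)} {I M : A × Bool → T}
    (hM : isModel M P) (hIM : ∀ ℓ, I ℓ ≤ M ℓ) (ℓ : A × Bool) :
    IsGreatest (annoSet P I ℓ) (gapStep P I ℓ) := by
  classical
  have h : ∃ m, IsGreatest (annoSet P I ℓ) m :=
    exists_greatest_of_bdd hcomp _ ⟨I ℓ, Or.inl rfl⟩ (M ℓ) (annoSet_le_model hM hIM ℓ)
  rw [gapStep, dif_pos h]
  exact h.choose_spec

/-- Suppose `T` is finite with least element `⊥`, any two elements
of `T` having a common upper bound are comparable, and the program `P` is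
consistent.  Then all iterates `T_Π↑i` are defined, the sequence of iterates is
increasing, it is eventually constant with limit `I*` satisfying
`T_Π(I*) = I*`, and `I*` is the least model of `P`. -/
theorem iterates_converge_to_least_model {A T : Type*} [Fintype A] [Nonempty A]
    [PartialOrder T] [Fintype T] [OrderBot T]
    (hcomp : ∀ a b : T, (∃ c : T, a ≤ c ∧ b ≤ c) → a ≤ b ∨ b ≤ a)
    (P : Set (GAPRule A T)) (hfin : P.Finite)
    (hcons : ∃ M : A × Bool → T, isModel M P) :
    ∃ seq : ℕ → (A × Bool → T),
      seq 0 = (fun _ : A × Bool => (⊥ : T)) ∧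
      (∀ (i : ℕ) (ℓ : A × Bool), IsLUB (annoSet P (seq i) ℓ) (seq (i + 1) ℓ)) ∧
      (∀ i j : ℕ, i ≤ j → ∀ ℓ : A × Bool, seq i ℓ ≤ seq j ℓ) ∧
      ∃ (N : ℕ) (Istar : A × Bool → T),
        (∀ i : ℕ, N ≤ i → seq i = Istar) ∧
        (∀ ℓ : A × Bool, IsLUB (annoSet P Istar ℓ) (Istar ℓ)) ∧
        isModel Istar P ∧
        (∀ M : A × Bool → T, isModel M P → ∀ ℓ : A × Bool, Istar ℓ ≤ M ℓ) := by
  classical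
  obtain ⟨M, hM⟩ := hcons
  set seq : ℕ → (A × Bool → T) := gapSeq P with hseq
  -- every iterate is below M
  have hle : ∀ i ℓ, seq i ℓ ≤ M ℓ := by
    intro i
    induction i with
    | zero => intro ℓ; exact bot_le
    | succ i ih =>
      intro ℓ
      exact annoSet_le_model hM ih ℓ _ (gapStep_greatest hcomp hM ih ℓ).1
  have hG : ∀ i ℓ, IsGreatest (annoSet P (seq i) ℓ) (seq (i + 1) ℓ) :=
    fun i ℓ => gapStep_greatest hcomp hM (hle i) ℓ
  have hstep : ∀ i ℓ, seq i ℓ ≤ seq (i + 1) ℓ :=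
    fun i ℓ => (hG i ℓ).2 (Or.inl rfl)
  have hmono : ∀ i j : ℕ, i ≤ j → ∀ ℓ, seq i ℓ ≤ seq j ℓ := by
    intro i j hij
    induction j, hij using Nat.le_induction with
    | base => intro ℓ; exact le_rfl
    | succ j hij ih => intro ℓ; exact le_trans (ih ℓ) (hstep j ℓ)
  -- stabilization
  obtain ⟨i, j, hne, hij⟩ := Finite.exists_ne_map_eq_of_infinite seq
  wlog hlt : i < j generalizing i j
  · exact this j i hne.symm hij.symm (hne.lt_or_gt.resolve_left hlt)
  have hstab : seq (i + 1) = seq i := by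
    funext ℓ
    exact le_antisymm (le_trans (hmono (i + 1) j hlt ℓ) (hij ▸ le_rfl)) (hstep i ℓ)
  have hconst : ∀ k, i ≤ k → seq k = seq i := by
    intro k hk
    induction k, hk using Nat.le_induction with
    | base => rfl
    | succ k hk ih =>
      have : seq (k + 1) = gapStep P (seq k) := rfl
      rw [this, ih]
      exact hstab
  refine ⟨seq, rfl, fun k ℓ => (hG k ℓ).isLUB, hmono, i, seq i, hconst, ?_, ?_, ?_⟩
  · intro ℓ
    have := (hG i ℓ).isLUB
    rwa [hstab] at this
  · -- seq i is a model
    intro r hrP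
    by_cases hb : ∀ p ∈ r.body, satLit (seq i) p.1 p.2
    · left
      have hmem : r.headAnn ∈ annoSet P (seq i) r.head :=
        Or.inr ⟨r, hrP, rfl, rfl, hb⟩
      have := (hG i r.head).2 hmem
      rw [hstab] at this
      exact this
    · right
      push_neg at hb
      exact hb
  · -- least model
    intro M' hM' ℓ
    have hle' : ∀ k ℓ, seq k ℓ ≤ M' ℓ := by
      intro k
      induction k with
      | zero => intro ℓ; exact bot_le
      | succ k ih =>
        intro ℓ
        exact annoSet_le_model hM' ih ℓ _ (hG k ℓ).1
    exact hle' i ℓ
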